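/- Let c_t² = σ_t²(1 − SNR_T/SNR_t) with SNR_t = α_t²/σ_t², α_t = exp(∫₀ᵗ f), σ_t² = α_t² ∫₀ᵗ g²/α². Then on (0, T), c_t′/c_t = f(t) + g²(t)/σ_t² − g²(t)/(2 c_t²). -/

import Mathlib

/-- Logarithmic derivative of the bridge standard deviation:
with `c_t² = σ_t²(1 − SNR_T/SNR_t)`, on `(0, T)` one has
`c_t′/c_t = f(t) + g²(t)/σ_t² − g²(t)/(2 c_t²)`. -/
theorem bridge_c_log_derivative (f g : ℝ → ℝ)
    (hf : Continuous f) (hg : Continuous g) (hgpos : ∀ t, 0 < g t)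
    (T : ℝ) (hT : 0 < T)
    (α σ2 SNR c : ℝ → ℝ)
    (hα : ∀ t, α t = Real.exp (∫ τ in (0:ℝ)..t, f τ))
    (hσ2 : ∀ t, σ2 t = α t ^ 2 * ∫ τ in (0:ℝ)..t, g τ ^ 2 / α τ ^ 2)
    (hSNR : ∀ t, SNR t = α t ^ 2 / σ2 t)
    (hc : ∀ t, c t = Real.sqrt (σ2 t * (1 - SNR T / SNR t))) :
    ∀ t ∈ Set.Ioo 0 T, ∃ c' : ℝ, HasDerivAt c c' t ∧
      c' / c t = f t + g t ^ 2 / σ2 t - g t ^ 2 / (2 * c t ^ 2) := by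
  intro t ht
  obtain ⟨ht0, htT⟩ := ht
  have hαpos : ∀ s, 0 < α s := fun s => by rw [hα]; exact Real.exp_pos _
  have hαne : ∀ s, α s ≠ 0 := fun s => (hαpos s).ne'
  -- continuity of α
  have hA' : ∀ s, HasDerivAt (fun u => ∫ τ in (0:ℝ)..u, f τ) (f s) s :=
    fun s => (hf.integral_hasStrictDerivAt 0 s).hasDerivAt
  have hαcont : Continuous α := by
    have : Continuous fun s => Real.exp (∫ τ in (0:ℝ)..s, f τ) := by
      apply Real.continuous_exp.comp
      exact continuous_iff_continuousAt.2 fun s => (hA' s).continuousAt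
    exact this.congr fun s => (hα s).symm
  -- the integrand of G
  set h : ℝ → ℝ := fun s => g s ^ 2 / α s ^ 2 with hhdef
  have hhcont : Continuous h := ((hg.pow 2).div (hαcont.pow 2)) fun s => pow_ne_zero 2 (hαne s)
  have hhpos : ∀ s, 0 < h s := fun s =>
    div_pos (pow_pos (hgpos s) 2) (pow_pos (hαpos s) 2)
  set G : ℝ → ℝ := fun s => ∫ τ in (0:ℝ)..s, h τ with hGdef
  have hG' : ∀ s, HasDerivAt G (h s) s :=
    fun s => (hhcont.integral_hasStrictDerivAt 0 s).hasDerivAt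
  have hσ2G : ∀ s, σ2 s = α s ^ 2 * G s := fun s => hσ2 s
  -- positivity facts
  have hGtpos : 0 < G t :=
    intervalIntegral.intervalIntegral_pos_of_pos (hhcont.intervalIntegrable 0 t) hhpos ht0
  have hGTt : G t < G T := by
    have hsub : G T - G t = ∫ τ in t..T, h τ :=
      intervalIntegral.integral_interval_sub_left (hhcont.intervalIntegrable 0 T)
        (hhcont.intervalIntegrable 0 t)
    have : 0 < ∫ τ in t..T, h τ :=
      intervalIntegral.intervalIntegral_pos_of_pos (hhcont.intervalIntegrable t T) hhpos htT
    linarith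
  have hGTpos : 0 < G T := lt_trans hGtpos hGTt
  have hGTne : G T ≠ 0 := hGTpos.ne'
  -- SNR ratio
  have hratio : ∀ s, SNR T / SNR s = G s / G T := by
    intro s
    have hs : ∀ r, SNR r = 1 / G r := by
      intro r
      rw [hSNR, hσ2G, div_mul_eq_div_div, div_self (pow_ne_zero 2 (hαne r))]
    rw [hs T, hs s, one_div, one_div, div_eq_mul_inv, inv_inv, mul_comm, ← div_eq_mul_inv]
  -- rewrite c
  set u : ℝ → ℝ := fun s => α s ^ 2 * (G s * (G T - G s)) / G T with hudef
  have hceq : c = fun s => Real.sqrt (u s) := by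
    funext s
    rw [hc, hσ2G, hratio]
    congr 1
    rw [eq_div_iff hGTne]
    field_simp
  -- positivity of u t
  have hupos : 0 < u t :=
    div_pos (mul_pos (pow_pos (hαpos t) 2) (mul_pos hGtpos (sub_pos.2 hGTt))) hGTpos
  -- derivative of α at t
  have hα' : HasDerivAt α (Real.exp (∫ τ in (0:ℝ)..t, f τ) * f t) t := by
    have := (hA' t).exp
    exact this.congr_of_eventuallyEq (Filter.Eventually.of_forall fun s => hα s)
  have hα'' : HasDerivAt α (α t * f t) t := by rwa [← hα t] at hα'
  -- derivative of u at t
  have h1 : HasDerivAt (fun s => α s ^ 2) (2 * α t ^ 1 * (α t * f t)) t := by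
    simpa using hα''.fun_pow 2
  have h2 : HasDerivAt (fun s => G T - G s) (-h t) t := (hG' t).const_sub (G T)
  have h3 : HasDerivAt (fun s => G s * (G T - G s))
      (h t * (G T - G t) + G t * (-h t)) t := (hG' t).mul h2
  have h4 : HasDerivAt (fun s => α s ^ 2 * (G s * (G T - G s)))
      (2 * α t ^ 1 * (α t * f t) * (G t * (G T - G t))
        + α t ^ 2 * (h t * (G T - G t) + G t * (-h t))) t := h1.mul h3
  have h5 : HasDerivAt u
      ((2 * α t ^ 1 * (α t * f t) * (G t * (G T - G t))
        + α t ^ 2 * (h t * (G T - G t) + G t * (-h t))) / G T) t := h4.div_const _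
  set u' : ℝ := (2 * α t ^ 1 * (α t * f t) * (G t * (G T - G t))
        + α t ^ 2 * (h t * (G T - G t) + G t * (-h t))) / G T with hu'def
  have hc' : HasDerivAt c (u' / (2 * Real.sqrt (u t))) t := by
    rw [hceq]; exact h5.sqrt hupos.ne'
  refine ⟨_, hc', ?_⟩
  have hct : c t = Real.sqrt (u t) := by rw [hceq]
  have hsq : Real.sqrt (u t) * Real.sqrt (u t) = u t := Real.mul_self_sqrt hupos.le
  have hsq2 : c t ^ 2 = u t := by rw [hct, sq, hsq]
  rw [hσ2G, hsq2, hct, div_div, mul_assoc, hsq]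
  have hGtne : G t ≠ 0 := hGtpos.ne'
  have hGTtne : G T - G t ≠ 0 := (sub_pos.2 hGTt).ne'
  have h2v : (2 : ℝ) * u t ≠ 0 := by positivity
  rw [eq_sub_iff_add_eq, ← add_div, div_eq_iff h2v]
  rw [hu'def, hhdef, hudef]
  field_simp [hαne t, hGtne, hGTne]
  ring
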